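/- Let φ, ψ be injective commuting endomorphisms of an abelian group G with finite cokernels. If φ(G) + ψ(G) = G, then φ(G) + ψ²(G) = G, and more generally φᵐ(G) + ψⁿ(G) = G for all m, n ≥ 1. -/

import Mathlib

private lemma step_aux {G : Type*} [AddCommGroup G] (α β δ : AddMonoid.End G)
    (h1 : AddMonoidHom.range α ⊔ AddMonoidHom.range β = ⊤)
    (h2 : AddMonoidHom.range δ ⊔ AddMonoidHom.range β = ⊤)
    (hc : δ * β = β * δ) :
    AddMonoidHom.range (δ * α) ⊔ AddMonoidHom.range β = ⊤ := by
  rw [AddSubgroup.eq_top_iff'] at *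
  intro x
  obtain ⟨y, ⟨a, ha⟩, z, ⟨b, hb⟩, hx⟩ := AddSubgroup.mem_sup.mp (h2 x)
  obtain ⟨y', ⟨c, hcc⟩, z', ⟨d, hd⟩, ha'⟩ := AddSubgroup.mem_sup.mp (h1 a)
  refine AddSubgroup.mem_sup.mpr ⟨(δ * α) c, ⟨c, rfl⟩, β (δ d + b), ⟨_, rfl⟩, ?_⟩
  have hcomm : δ (β d) = β (δ d) := by
    have := congrArg (fun f : AddMonoid.End G => f d) hc
    simpa using this
  calc (δ * α) c + β (δ d + b)
      = δ (α c) + (β (δ d) + β b) := by rw [map_add]; rfl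
    _ = δ (α c) + δ (β d) + β b := by rw [← hcomm]; abel
    _ = δ (α c + β d) + β b := by rw [map_add]
    _ = x := by subst hcc hd ha' ha hb hx; rfl

private lemma pow_sup {G : Type*} [AddCommGroup G] (φ ψ : AddMonoid.End G)
    (hc : φ * ψ = ψ * φ)
    (hind : AddMonoidHom.range φ ⊔ AddMonoidHom.range ψ = ⊤) :
    ∀ m n : ℕ, AddMonoidHom.range (φ ^ m) ⊔ AddMonoidHom.range (ψ ^ n) = ⊤ := by
  have hC : Commute φ ψ := hc
  -- first: range φ ⊔ range (ψ^n) = ⊤ for all n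
  have key : ∀ n : ℕ, AddMonoidHom.range (ψ ^ n) ⊔ AddMonoidHom.range φ = ⊤ := by
    intro n
    induction n with
    | zero =>
      rw [pow_zero, AddSubgroup.eq_top_iff']
      intro x
      exact AddSubgroup.mem_sup.mpr ⟨x, ⟨x, rfl⟩, 0, AddSubgroup.zero_mem _, add_zero x⟩
    | succ n ih =>
      have := step_aux (ψ ^ n) φ ψ ih (by rw [sup_comm]; exact hind) hC.symm.eq
      rwa [← pow_succ'] at this
  intro m n
  induction m with
  | zero =>
    rw [AddSubgroup.eq_top_iff']
    intro x
    exact AddSubgroup.mem_sup.mpr ⟨x, ⟨x, rfl⟩, 0, AddSubgroup.zero_mem _, add_zero x⟩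
  | succ m ih =>
    have h2' : AddMonoidHom.range φ ⊔ AddMonoidHom.range (ψ ^ n) = ⊤ := by
      rw [sup_comm]; exact key n
    have := step_aux (φ ^ m) (ψ ^ n) φ ih h2' (hC.pow_right n).eq
    rwa [← pow_succ'] at this

theorem stmt1 {G : Type*} [AddCommGroup G] (φ ψ : AddMonoid.End G)
    (hφ : Function.Injective φ) (hψ : Function.Injective ψ)
    (hc : φ * ψ = ψ * φ)
    (h1 : Finite (G ⧸ AddMonoidHom.range φ)) (h2 : Finite (G ⧸ AddMonoidHom.range ψ))
    (hind : AddMonoidHom.range φ ⊔ AddMonoidHom.range ψ = ⊤) :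
    (AddMonoidHom.range φ ⊔ AddMonoidHom.range (ψ ^ 2) = ⊤) ∧
      ∀ m n : ℕ, 1 ≤ m → 1 ≤ n →
        AddMonoidHom.range (φ ^ m) ⊔ AddMonoidHom.range (ψ ^ n) = ⊤ := by
  have h := pow_sup φ ψ hc hind
  refine ⟨?_, fun m n _ _ => h m n⟩
  have := h 1 2
  rwa [pow_one] at this
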